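/- If (q₁,p₁,q₂,p₂) solves the coupled Hamiltonian system with H = -(q₁²p₁² - 2α₂q₁p₁ - q₁)/(2s) - (q₂²p₂² + 2(α₁+α₂)q₂p₂ + ηsq₂)/(2s) - p₁p₂/s, then y := p₁ satisfies y'' = (y')²/y - (1/s)y' - α₂/(2s²) - 1/(4s²y) - y²w/s², where w := p₂, at points where y ≠ 0 and s ≠ 0. -/

import Mathlib

open Complex

/-- For solutions of the coupled Hamiltonian system with
`H = -(q₁²p₁² - 2α₂q₁p₁ - q₁)/(2s) - (q₂²p₂² + 2(α₁+α₂)q₂p₂ + ηsq₂)/(2s) - p₁p₂/s`,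
the function `y := p₁` satisfies
`y'' = (y')²/y - y'/s - α₂/(2s²) - 1/(4s²y) - y²w/s²` with `w := p₂`. -/
theorem stmt_19 (α₀ α₁ α₂ η : ℂ) (hα : α₀ + α₁ + α₂ = 1)
    (q₁ p₁ q₂ p₂ : ℝ → ℂ)
    (hq₁ : ∀ s : ℝ, s ≠ 0 → HasDerivAt q₁
      (-(q₁ s)^2 * p₁ s / (s:ℂ) + α₂ * q₁ s / (s:ℂ) - p₂ s / (s:ℂ)) s)
    (hp₁ : ∀ s : ℝ, s ≠ 0 → HasDerivAt p₁
      (q₁ s * (p₁ s)^2 / (s:ℂ) - α₂ * p₁ s / (s:ℂ) - 1/(2*(s:ℂ))) s)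
    (hq₂ : ∀ s : ℝ, s ≠ 0 → HasDerivAt q₂
      (-(q₂ s)^2 * p₂ s / (s:ℂ) - (α₁ + α₂) * q₂ s / (s:ℂ) - p₁ s / (s:ℂ)) s)
    (hp₂ : ∀ s : ℝ, s ≠ 0 → HasDerivAt p₂
      (q₂ s * (p₂ s)^2 / (s:ℂ) + (α₁ + α₂) * p₂ s / (s:ℂ) + η/2) s) :
    ∀ s : ℝ, s ≠ 0 → p₁ s ≠ 0 →
      deriv (deriv p₁) s =
        (deriv p₁ s)^2 / p₁ s - (1/(s:ℂ)) * deriv p₁ s - α₂/(2*(s:ℂ)^2)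
          - 1/(4*(s:ℂ)^2 * p₁ s) - (p₁ s)^2 * p₂ s / (s:ℂ)^2 := by
  intro s hs hy
  have hsC : (s:ℂ) ≠ 0 := by exact_mod_cast hs
  have h2s : (2:ℂ) * (s:ℂ) ≠ 0 := by
    simp [hsC]
  have hR : HasDerivAt (fun t : ℝ => (t:ℂ)) 1 s := by
    exact Complex.ofRealCLM.hasDerivAt
  have h1 := hq₁ s hs
  have h2 := hp₁ s hs
  have hsq : HasDerivAt (fun t : ℝ => (p₁ t)^2)
      ((q₁ s * (p₁ s)^2 / (s:ℂ) - α₂ * p₁ s / (s:ℂ) - 1/(2*(s:ℂ))) * p₁ s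
        + p₁ s * (q₁ s * (p₁ s)^2 / (s:ℂ) - α₂ * p₁ s / (s:ℂ) - 1/(2*(s:ℂ)))) s := by
    have := h2.mul h2
    simp only [pow_two] at this ⊢
    exact this
  have hA := (h1.mul hsq).div hR hsC
  have hB := (h2.const_mul α₂).div hR hsC
  have hC := (hasDerivAt_const s (1:ℂ)).div (hR.const_mul 2) h2s
  have hG := (hA.sub hB).sub hC
  have hev : deriv p₁ =ᶠ[nhds s]
      (fun t : ℝ => q₁ t * (p₁ t)^2 / (t:ℂ) - α₂ * p₁ t / (t:ℂ) - 1/(2*(t:ℂ))) := by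
    filter_upwards [eventually_ne_nhds hs] with t ht
    exact (hp₁ t ht).deriv
  rw [hev.deriv_eq, HasDerivAt.deriv (f := fun t : ℝ => q₁ t * (p₁ t)^2 / (t:ℂ) - α₂ * p₁ t / (t:ℂ) - 1/(2*(t:ℂ))) hG, h2.deriv]
  simp only [Pi.mul_apply]
  linear_combination
    ((-1:ℂ)*p₂ s*(p₁ s)^2*((s:ℂ))⁻¹^2 + (1/2:ℂ)*α₂*((s:ℂ))⁻¹^2 + α₂^2*p₁ s*((s:ℂ))⁻¹^2
      + (-1:ℂ)*q₁ s*p₁ s*((s:ℂ))⁻¹^2 + (-2:ℂ)*q₁ s*α₂*(p₁ s)^2*((s:ℂ))⁻¹^2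
      + (q₁ s)^2*(p₁ s)^3*((s:ℂ))⁻¹^2) * mul_inv_cancel₀ hsC
    + ((-1:ℂ)*α₂*((s:ℂ))⁻¹^2 + (-1:ℂ)*α₂^2*p₁ s*((s:ℂ))⁻¹^2 + q₁ s*p₁ s*((s:ℂ))⁻¹^2
      + (2:ℂ)*q₁ s*α₂*(p₁ s)^2*((s:ℂ))⁻¹^2 + (-1:ℂ)*(q₁ s)^2*(p₁ s)^3*((s:ℂ))⁻¹^2) * mul_inv_cancel₀ hy
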